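/- Let q ≥ 2 be an integer and define, for integers s₀,…,s_{q−1}, t₀,…,t_{q−1}, the lattice set Ω = {(i, j₁,…,j_{q−1}, k₁,…,k_{q−1}) ∈ ℤ^{2q−1} : −s₀ ≤ i; for each μ = 1,…,q−1, −s_μ ≤ i + (q²+q)k_μ < −s_μ + (q²+q); for each ν = 1,…,q−1, −t_ν ≤ qi + (q²+q)j_ν − (q+1)Σ_{μ=1}^{q−1} k_μ < −t_ν + (q²+q); and −t₀ ≤ −q²i − (q²+q)Σ_{ν=1}^{q−1} j_ν − (q+1)Σ_{μ=1}^{q−1} k_μ}. Then #Ω is invariant under any permutation of (t₀, t₁, …, t_{q−1}). -/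
import Mathlib


/-- The (2q−1)-dimensional lattice point set Ω with parameters
    s = (s₀,…,s_{q−1}) and t = (t₀,…,t_{q−1}), where q = n+1: points
    (i, j₁,…,j_n, k₁,…,k_n) with −s₀ ≤ i; −s_μ ≤ i+(q²+q)k_μ < −s_μ+(q²+q);
    −t_ν ≤ qi+(q²+q)j_ν−(q+1)Σk < −t_ν+(q²+q); and
    −t₀ ≤ −q²i−(q²+q)Σj−(q+1)Σk. -/
def Omega2 (q : ℤ) (n : ℕ) (s t : Fin (n + 1) → ℤ) :
    Set (ℤ × (Fin n → ℤ) × (Fin n → ℤ)) :=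
  {p | -(s 0) ≤ p.1 ∧
       (∀ μ : Fin n, -(s μ.succ) ≤ p.1 + (q ^ 2 + q) * p.2.2 μ ∧
          p.1 + (q ^ 2 + q) * p.2.2 μ < -(s μ.succ) + (q ^ 2 + q)) ∧
       (∀ ν : Fin n,
          -(t ν.succ) ≤ q * p.1 + (q ^ 2 + q) * p.2.1 ν - (q + 1) * ∑ μ, p.2.2 μ ∧
          q * p.1 + (q ^ 2 + q) * p.2.1 ν - (q + 1) * ∑ μ, p.2.2 μ
            < -(t ν.succ) + (q ^ 2 + q)) ∧
       -(t 0) ≤ -q ^ 2 * p.1 - (q ^ 2 + q) * ∑ ν, p.2.1 ν - (q + 1) * ∑ μ, p.2.2 μ}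

/-- The symmetrized set: an extra coordinate `j₀`, all `q` sandwich conditions,
    and the symmetric inequality `i + ∑ j ≤ 0`. -/
def OmegaSym (q : ℤ) (n : ℕ) (s t : Fin (n + 1) → ℤ) :
    Set (ℤ × (Fin (n + 1) → ℤ) × (Fin n → ℤ)) :=
  {p | -(s 0) ≤ p.1 ∧
       (∀ μ : Fin n, -(s μ.succ) ≤ p.1 + (q ^ 2 + q) * p.2.2 μ ∧
          p.1 + (q ^ 2 + q) * p.2.2 μ < -(s μ.succ) + (q ^ 2 + q)) ∧
       (∀ ν : Fin (n + 1),
          -(t ν) ≤ q * p.1 + (q ^ 2 + q) * p.2.1 ν - (q + 1) * ∑ μ, p.2.2 μ ∧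
          q * p.1 + (q ^ 2 + q) * p.2.1 ν - (q + 1) * ∑ μ, p.2.2 μ
            < -(t ν) + (q ^ 2 + q)) ∧
       p.1 + ∑ ν, p.2.1 ν ≤ 0}

/-- The canonical integer `m` with `c ≤ D*m < c + D`. -/
def jz (D c : ℤ) : ℤ := -((-c) / D)

lemma jz_spec (D : ℤ) (hD : 0 < D) (c : ℤ) :
    c ≤ D * jz D c ∧ D * jz D c < c + D := by
  have h0 : 0 ≤ (-c) % D := Int.emod_nonneg _ (ne_of_gt hD)
  have h1 : (-c) % D < D := Int.emod_lt_of_pos _ hD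
  have h2 : (-c) % D = -c - D * ((-c) / D) := Int.emod_def _ _
  unfold jz
  constructor <;> nlinarith [h0, h1, h2]

lemma jz_unique (D : ℤ) (hD : 0 < D) (c m : ℤ)
    (h1 : c ≤ D * m) (h2 : D * m < c + D) : m = jz D c := by
  obtain ⟨h3, h4⟩ := jz_spec D hD c
  have ha : D * m < D * (jz D c + 1) := by nlinarith
  have hb : D * jz D c < D * (m + 1) := by nlinarith
  have ha' : m < jz D c + 1 := lt_of_mul_lt_mul_left ha (le_of_lt hD)
  have hb' : jz D c < m + 1 := lt_of_mul_lt_mul_left hb (le_of_lt hD)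
  omega

/-- The map adjoining the canonical `j₀`. -/
def Fmap (q : ℤ) (n : ℕ) (t0 : ℤ) (p : ℤ × (Fin n → ℤ) × (Fin n → ℤ)) :
    ℤ × (Fin (n + 1) → ℤ) × (Fin n → ℤ) :=
  (p.1, Fin.cons (jz (q ^ 2 + q) (-t0 - q * p.1 + (q + 1) * ∑ μ, p.2.2 μ)) p.2.1, p.2.2)

lemma omega2_ncard (q : ℤ) (n : ℕ) (hD : 0 < q ^ 2 + q) (s t : Fin (n + 1) → ℤ) :
    (Omega2 q n s t).ncard = (OmegaSym q n s t).ncard := by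
  have hFinj : Function.Injective (Fmap q n (t 0)) := by
    intro a b hab
    simp only [Fmap, Prod.mk.injEq] at hab
    obtain ⟨h1, h2', h3⟩ := hab
    have h2 : a.2.1 = b.2.1 := by
      have := congrArg Fin.tail h2'
      simpa [Fin.tail_cons] using this
    exact Prod.ext h1 (Prod.ext h2 h3)
  have hset : OmegaSym q n s t = Fmap q n (t 0) '' Omega2 q n s t := by
    ext p
    constructor
    · rintro ⟨h1, h2, h3, h4⟩
      refine ⟨(p.1, Fin.tail p.2.1, p.2.2), ⟨h1, h2, ?_, ?_⟩, ?_⟩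
      · intro ν
        have := h3 ν.succ
        simpa [Fin.tail] using this
      · -- last Omega2 condition from the symmetric inequality and ν = 0 condition
        have h30 := (h3 0).1
        have hsum : ∑ ν, p.2.1 ν = p.2.1 0 + ∑ μ : Fin n, Fin.tail p.2.1 μ := by
          simp [Fin.sum_univ_succ, Fin.tail]
        have key : p.2.1 0 ≤ -p.1 - ∑ μ : Fin n, Fin.tail p.2.1 μ := by omega
        have hmul : (q ^ 2 + q) * p.2.1 0
            ≤ (q ^ 2 + q) * (-p.1 - ∑ μ : Fin n, Fin.tail p.2.1 μ) :=
          mul_le_mul_of_nonneg_left key (le_of_lt hD)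
        have expand : q * p.1 + (q ^ 2 + q) * (-p.1 - ∑ μ : Fin n, Fin.tail p.2.1 μ)
            - (q + 1) * ∑ μ, p.2.2 μ
            = -q ^ 2 * p.1 - (q ^ 2 + q) * ∑ μ : Fin n, Fin.tail p.2.1 μ
              - (q + 1) * ∑ μ, p.2.2 μ := by ring
        simp only
        linarith
      · -- Fmap gives back p, by uniqueness of j₀
        have h30 := h3 0
        have hj : p.2.1 0
            = jz (q ^ 2 + q) (-(t 0) - q * p.1 + (q + 1) * ∑ μ, p.2.2 μ) := by
          apply jz_unique _ hD
          · linarith [h30.1]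
          · linarith [h30.2]
        simp only [Fmap]
        refine Prod.ext rfl (Prod.ext ?_ rfl)
        show Fin.cons (jz (q ^ 2 + q) (-(t 0) - q * p.1 + (q + 1) * ∑ μ, p.2.2 μ))
          (Fin.tail p.2.1) = p.2.1
        rw [← hj]
        exact Fin.cons_self_tail p.2.1
    · rintro ⟨a, ⟨h1, h2, h3, h4⟩, rfl⟩
      obtain ⟨hs1, hs2⟩ :=
        jz_spec (q ^ 2 + q) hD (-(t 0) - q * a.1 + (q + 1) * ∑ μ, a.2.2 μ)
      refine ⟨h1, h2, ?_, ?_⟩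
      · intro ν
        refine Fin.cases ?_ ?_ ν
        · simp only [Fmap, Fin.cons_zero]
          constructor
          · linarith
          · linarith
        · intro μ
          have := h3 μ
          simpa [Fmap, Fin.cons_succ] using this
      · -- symmetric inequality from the last Omega2 condition
        have hm : -(t 0) - q * a.1 + (q + 1) * ∑ μ, a.2.2 μ
            ≤ (q ^ 2 + q) * (-a.1 - ∑ μ : Fin n, a.2.1 μ) := by
          have expand : q * a.1 + (q ^ 2 + q) * (-a.1 - ∑ μ : Fin n, a.2.1 μ)
              - (q + 1) * ∑ μ, a.2.2 μ
              = -q ^ 2 * a.1 - (q ^ 2 + q) * ∑ μ : Fin n, a.2.1 μ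
                - (q + 1) * ∑ μ, a.2.2 μ := by ring
          linarith
        have hlt : (q ^ 2 + q) * jz (q ^ 2 + q)
              (-(t 0) - q * a.1 + (q + 1) * ∑ μ, a.2.2 μ)
            < (q ^ 2 + q) * ((-a.1 - ∑ μ : Fin n, a.2.1 μ) + 1) := by nlinarith
        have hle : jz (q ^ 2 + q) (-(t 0) - q * a.1 + (q + 1) * ∑ μ, a.2.2 μ)
            < (-a.1 - ∑ μ : Fin n, a.2.1 μ) + 1 :=
          lt_of_mul_lt_mul_left hlt (le_of_lt hD)
        have hsum : ∑ ν, (Fmap q n (t 0) a).2.1 ν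
            = jz (q ^ 2 + q) (-(t 0) - q * a.1 + (q + 1) * ∑ μ, a.2.2 μ)
              + ∑ μ : Fin n, a.2.1 μ := by
          simp [Fmap, Fin.sum_univ_succ]
        show (Fmap q n (t 0) a).1 + ∑ ν, (Fmap q n (t 0) a).2.1 ν ≤ 0
        rw [hsum]
        show a.1 + _ ≤ 0
        omega
  rw [hset, Set.ncard_image_of_injective _ hFinj]

lemma omegaSym_perm (q : ℤ) (n : ℕ) (s t : Fin (n + 1) → ℤ)
    (σ : Equiv.Perm (Fin (n + 1))) :
    (OmegaSym q n s t).ncard = (OmegaSym q n s (t ∘ σ)).ncard := by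
  have hGinj : Function.Injective
      (fun p : ℤ × (Fin (n + 1) → ℤ) × (Fin n → ℤ) => (p.1, p.2.1 ∘ σ, p.2.2)) := by
    intro a b hab
    simp only [Prod.mk.injEq] at hab
    obtain ⟨h1, h2', h3⟩ := hab
    have h2 : a.2.1 = b.2.1 := by
      funext x
      have := congrFun h2' (σ.symm x)
      simpa using this
    exact Prod.ext h1 (Prod.ext h2 h3)
  have hset : OmegaSym q n s (t ∘ σ)
      = (fun p : ℤ × (Fin (n + 1) → ℤ) × (Fin n → ℤ) => (p.1, p.2.1 ∘ σ, p.2.2))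
        '' OmegaSym q n s t := by
    ext p
    constructor
    · rintro ⟨h1, h2, h3, h4⟩
      refine ⟨(p.1, p.2.1 ∘ ⇑σ.symm, p.2.2), ⟨h1, h2, ?_, ?_⟩, ?_⟩
      · intro ν
        have := h3 (σ.symm ν)
        simpa [Function.comp] using this
      · have hs : ∑ x, p.2.1 (σ.symm x) = ∑ x, p.2.1 x := Equiv.sum_comp σ.symm p.2.1
        simpa [Function.comp, hs] using h4
      · refine Prod.ext rfl (Prod.ext ?_ rfl)
        funext x
        simp
    · rintro ⟨a, ⟨h1, h2, h3, h4⟩, rfl⟩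
      refine ⟨h1, h2, fun ν => by simpa [Function.comp] using h3 (σ ν), ?_⟩
      have hs : ∑ x, a.2.1 (σ x) = ∑ x, a.2.1 x := Equiv.sum_comp σ a.2.1
      simpa [Function.comp, hs] using h4
  rw [hset, Set.ncard_image_of_injective _ hGinj]

/-- #Ω is invariant under any permutation of (t₀, t₁, …, t_{q−1}). -/
theorem stmt_17 (q : ℤ) (n : ℕ) (hq : 2 ≤ q) (hn : (q : ℤ) = n + 1)
    (s t : Fin (n + 1) → ℤ) (σ : Equiv.Perm (Fin (n + 1))) :
    (Omega2 q n s t).ncard = (Omega2 q n s (t ∘ σ)).ncard := by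
  have hD : 0 < q ^ 2 + q := by nlinarith
  rw [omega2_ncard q n hD s t, omegaSym_perm q n s t σ,
    ← omega2_ncard q n hD s (t ∘ σ)]
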